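/- arXiv:1911.12884 — 2 statements merged into one kernel-verified Lean document; each statement's English description precedes it below -/
import Mathlib

section
/- Derivations in a rooted graph transformation system with relabelling are invertible: for every rule r = ⟨L ← K → R⟩ and all TLRGs G and H, G ⇒_r H (via some match) if and only if H ⇒_{r⁻¹} G (via some match), where r⁻¹ = ⟨R ← K → L⟩ is the inverse rule. -/
/-! # Rooted graph transformation with relabelling -/

/-- A graph over a label alphabet `(LV, LE)`: finite vertex and edge sets, total
source/target functions, a partial node-labelling function `l`, a total
edge-labelling function `m`, and a partial rootedness function `p`
(`some true` = root node, `some false` = non-root, `none` = undefined). -/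
structure RGraph (LV LE : Type) : Type 1 where
  V : Type
  E : Type
  finV : Finite V
  finE : Finite E
  s : E → V
  t : E → V
  l : V → Option LV
  m : E → LE
  p : V → Option Bool

namespace RGraph

variable {LV LE : Type}

def IsTotallyLabelled (G : RGraph LV LE) : Prop := ∀ v, (G.l v).isSome
def IsTotallyRooted (G : RGraph LV LE) : Prop := ∀ v, (G.p v).isSome
/-- totally labelled, totally rooted graph -/
def IsTLRG (G : RGraph LV LE) : Prop := G.IsTotallyLabelled ∧ G.IsTotallyRooted

/-- The number of root nodes `|p⁻¹({1})|`. -/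
noncomputable def rootCount (G : RGraph LV LE) : ℕ := Nat.card {v : G.V // G.p v = some true}

/-- The degree of a node. -/
noncomputable def degree (G : RGraph LV LE) (v : G.V) : ℕ :=
  Nat.card {e : G.E // G.s e = v} + Nat.card {e : G.E // G.t e = v}

end RGraph

/-- Graph morphisms preserve sources, targets, edge labels, and node labels and
rootedness wherever these are defined. -/
structure Morphism {LV LE : Type} (G H : RGraph LV LE) : Type where
  fV : G.V → H.V
  fE : G.E → H.E
  src : ∀ e, fV (G.s e) = H.s (fE e)
  tgt : ∀ e, fV (G.t e) = H.t (fE e)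
  edgeLabel : ∀ e, G.m e = H.m (fE e)
  nodeLabel : ∀ v x, G.l v = some x → H.l (fV v) = some x
  rootedness : ∀ v b, G.p v = some b → H.p (fV v) = some b

namespace Morphism

variable {LV LE : Type} {G H K : RGraph LV LE}

def Injective (g : Morphism G H) : Prop := Function.Injective g.fV ∧ Function.Injective g.fE

/-- identity morphism -/
def ident (G : RGraph LV LE) : Morphism G G where
  fV := id
  fE := id
  src := fun _ => rfl
  tgt := fun _ => rfl
  edgeLabel := fun _ => rfl
  nodeLabel := fun _ _ h => h
  rootedness := fun _ _ h => h

/-- composition of morphisms -/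
def comp (g : Morphism G H) (h : Morphism H K) : Morphism G K where
  fV := h.fV ∘ g.fV
  fE := h.fE ∘ g.fE
  src := fun e => by simp [Function.comp, g.src e, h.src (g.fE e)]
  tgt := fun e => by simp [Function.comp, g.tgt e, h.tgt (g.fE e)]
  edgeLabel := fun e => by simp [Function.comp, ← h.edgeLabel (g.fE e), g.edgeLabel e]
  nodeLabel := fun v x hx => h.nodeLabel _ _ (g.nodeLabel v x hx)
  rootedness := fun v b hb => h.rootedness _ _ (g.rootedness v b hb)

end Morphism

/-- An isomorphism of graphs: a morphism with a two-sided inverse morphism. -/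
structure Iso {LV LE : Type} (G H : RGraph LV LE) : Type where
  toMor : Morphism G H
  invMor : Morphism H G
  leftV : ∀ v, invMor.fV (toMor.fV v) = v
  leftE : ∀ e, invMor.fE (toMor.fE e) = e
  rightV : ∀ v, toMor.fV (invMor.fV v) = v
  rightE : ∀ e, toMor.fE (invMor.fE e) = e

/-- A rule `⟨L ← K → R⟩`: graphs `L`, `K`, `R` together with inclusion
(injective) morphisms `K ↪ L` and `K ↪ R`.  (In the rooted relabelling setting
`L` and `R` are additionally required to be TLRGs; this requirement is stated
as a hypothesis where needed.) -/
structure Rule (LV LE : Type) : Type 1 where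
  L : RGraph LV LE
  K : RGraph LV LE
  R : RGraph LV LE
  incL : Morphism K L
  incR : Morphism K R
  injL : incL.Injective
  injR : incR.Injective

namespace Rule

variable {LV LE : Type} (r : Rule LV LE) (G : RGraph LV LE)

/-- The inverse rule `r⁻¹ = ⟨R ← K → L⟩`. -/
def inv (r : Rule LV LE) : Rule LV LE where
  L := r.R
  K := r.K
  R := r.L
  incL := r.incR
  incR := r.incL
  injL := r.injR
  injR := r.injL

/-- The dangling condition: no edge of `G ∖ g(L)` is incident to a node of `g(L ∖ K)`. -/
def Dangling (g : Morphism r.L G) : Prop :=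
  ∀ e : G.E, (∀ e' : r.L.E, g.fE e' ≠ e) →
    ∀ v : r.L.V, (∀ k : r.K.V, r.incL.fV k ≠ v) →
      G.s e ≠ g.fV v ∧ G.t e ≠ g.fV v

/-- The match `g` is applicable: it is injective and satisfies the dangling condition. -/
def Applicable (g : Morphism r.L G) : Prop := g.Injective ∧ r.Dangling G g

/-- the nodes `g(L ∖ K)` deleted by applying `r` via `g` -/
def DelV (g : Morphism r.L G) : Set G.V :=
  {x | ∃ v : r.L.V, (∀ k : r.K.V, r.incL.fV k ≠ v) ∧ g.fV v = x}

/-- the edges `g(L ∖ K)` deleted by applying `r` via `g` -/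
def DelE (g : Morphism r.L G) : Set G.E :=
  {x | ∃ e : r.L.E, (∀ k : r.K.E, r.incL.fE k ≠ e) ∧ g.fE e = x}

theorem kept_incL {g : Morphism r.L G} (hinj : g.Injective) (k : r.K.V) :
    g.fV (r.incL.fV k) ∉ r.DelV G g := by
  rintro ⟨v, hv, heq⟩
  exact hv k (hinj.1 heq).symm

theorem kept_src {g : Morphism r.L G} (h : r.Applicable G g) {e : G.E}
    (he : e ∉ r.DelE G g) : G.s e ∉ r.DelV G g := by
  rintro ⟨v, hv, heq⟩
  by_cases hc : ∃ e', g.fE e' = e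
  · obtain ⟨e', rfl⟩ := hc
    by_cases hk : ∃ k, r.incL.fE k = e'
    · obtain ⟨k, rfl⟩ := hk
      have h1 : g.fV (r.L.s (r.incL.fE k)) = G.s (g.fE (r.incL.fE k)) := g.src _
      have h2 : r.incL.fV (r.K.s k) = r.L.s (r.incL.fE k) := r.incL.src k
      have h3 : g.fV v = g.fV (r.incL.fV (r.K.s k)) := by rw [heq, h2, h1]
      exact hv _ (h.1.1 h3).symm
    · exact he ⟨e', fun k hk' => hk ⟨k, hk'⟩, rfl⟩
  · exact (h.2 e (fun e' he' => hc ⟨e', he'⟩) v hv).1 heq.symm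

theorem kept_tgt {g : Morphism r.L G} (h : r.Applicable G g) {e : G.E}
    (he : e ∉ r.DelE G g) : G.t e ∉ r.DelV G g := by
  rintro ⟨v, hv, heq⟩
  by_cases hc : ∃ e', g.fE e' = e
  · obtain ⟨e', rfl⟩ := hc
    by_cases hk : ∃ k, r.incL.fE k = e'
    · obtain ⟨k, rfl⟩ := hk
      have h1 : g.fV (r.L.t (r.incL.fE k)) = G.t (g.fE (r.incL.fE k)) := g.tgt _
      have h2 : r.incL.fV (r.K.t k) = r.L.t (r.incL.fE k) := r.incL.tgt k
      have h3 : g.fV v = g.fV (r.incL.fV (r.K.t k)) := by rw [heq, h2, h1]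
      exact hv _ (h.1.1 h3).symm
    · exact he ⟨e', fun k hk' => hk ⟨k, hk'⟩, rfl⟩
  · exact (h.2 e (fun e' he' => hc ⟨e', he'⟩) v hv).2 heq.symm

attribute [local instance] Classical.propDecidable

/-- The result graph of applying `r` to `G` via an applicable match `g`:
delete `g(L ∖ K)` (undefining labels/rootedness of images of interface nodes
where they are undefined in `K`), then add `R ∖ K` disjointly, relabelling
(and re-rooting) the images of interface nodes according to `R`. -/
noncomputable def result (g : Morphism r.L G) (h : r.Applicable G g) : RGraph LV LE where
  V := {x : G.V // x ∉ r.DelV G g} ⊕ {v : r.R.V // ∀ k, r.incR.fV k ≠ v}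
  E := {x : G.E // x ∉ r.DelE G g} ⊕ {e : r.R.E // ∀ k, r.incR.fE k ≠ e}
  finV := by
    haveI := G.finV; haveI := r.R.finV
    infer_instance
  finE := by
    haveI := G.finE; haveI := r.R.finE
    infer_instance
  s := fun e =>
    match e with
    | Sum.inl x => Sum.inl ⟨G.s x.1, r.kept_src G h x.2⟩
    | Sum.inr x =>
        if hk : ∃ k, r.incR.fV k = r.R.s x.1 then
          Sum.inl ⟨g.fV (r.incL.fV hk.choose), r.kept_incL G h.1 _⟩
        else Sum.inr ⟨r.R.s x.1, fun k hk' => hk ⟨k, hk'⟩⟩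
  t := fun e =>
    match e with
    | Sum.inl x => Sum.inl ⟨G.t x.1, r.kept_tgt G h x.2⟩
    | Sum.inr x =>
        if hk : ∃ k, r.incR.fV k = r.R.t x.1 then
          Sum.inl ⟨g.fV (r.incL.fV hk.choose), r.kept_incL G h.1 _⟩
        else Sum.inr ⟨r.R.t x.1, fun k hk' => hk ⟨k, hk'⟩⟩
  l := fun v =>
    match v with
    | Sum.inl x =>
        if hk : ∃ k : r.K.V, r.K.l k = none ∧ g.fV (r.incL.fV k) = x.1 then
          r.R.l (r.incR.fV hk.choose)
        else G.l x.1
    | Sum.inr v => r.R.l v.1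
  m := fun e =>
    match e with
    | Sum.inl x => G.m x.1
    | Sum.inr x => r.R.m x.1
  p := fun v =>
    match v with
    | Sum.inl x =>
        if hk : ∃ k : r.K.V, r.K.p k = none ∧ g.fV (r.incL.fV k) = x.1 then
          r.R.p (r.incR.fV hk.choose)
        else G.p x.1
    | Sum.inr v => r.R.p v.1

/-- Direct derivation `G ⇒_r M`: there is an applicable match `g` such that `M`
is isomorphic to the result of applying `r` to `G` via `g`. -/
def Deriv (r : Rule LV LE) (G M : RGraph LV LE) : Prop :=
  ∃ (g : Morphism r.L G) (h : r.Applicable G g), Nonempty (Iso (r.result G g h) M)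

end Rule

/-- `G ⇒_𝓡 H` for a set of rules. -/
def GTStep {LV LE : Type} (Rs : Set (Rule LV LE)) (G H : RGraph LV LE) : Prop :=
  ∃ r ∈ Rs, r.Deriv G H

/-- `G ⇒*_𝓡 H`: the reflexive-transitive closure of `⇒_𝓡`, up to isomorphism. -/
def GTDerivStar {LV LE : Type} (Rs : Set (Rule LV LE)) (G H : RGraph LV LE) : Prop :=
  Relation.ReflTransGen (GTStep Rs) G H ∨ Nonempty (Iso G H)

/-! ## Auxiliary development for invertibility -/

section Invertibility

attribute [local instance] Classical.propDecidable

variable {LV LE : Type}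

theorem inl_ext {α β : Type} {p : α → Prop} {a b : α} {ha : p a} {hb : p b} (h : a = b) :
    (Sum.inl ⟨a, ha⟩ : {x // p x} ⊕ β) = Sum.inl ⟨b, hb⟩ := by subst h; rfl

theorem inr_ext {α β : Type} {p : β → Prop} {a b : β} {ha : p a} {hb : p b} (h : a = b) :
    (Sum.inr ⟨a, ha⟩ : α ⊕ {x // p x}) = Sum.inr ⟨b, hb⟩ := by subst h; rfl

namespace Iso

variable {A B C : RGraph LV LE}

def symm (φ : Iso A B) : Iso B A :=
  ⟨φ.invMor, φ.toMor, φ.rightV, φ.rightE, φ.leftV, φ.leftE⟩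

def trans (φ : Iso A B) (ψ : Iso B C) : Iso A C where
  toMor := φ.toMor.comp ψ.toMor
  invMor := ψ.invMor.comp φ.invMor
  leftV v := by simp [Morphism.comp, ψ.leftV, φ.leftV]
  leftE e := by simp [Morphism.comp, ψ.leftE, φ.leftE]
  rightV v := by simp [Morphism.comp, φ.rightV, ψ.rightV]
  rightE e := by simp [Morphism.comp, φ.rightE, ψ.rightE]

theorem injV (φ : Iso A B) : Function.Injective φ.toMor.fV :=
  Function.LeftInverse.injective φ.leftV

theorem injE (φ : Iso A B) : Function.Injective φ.toMor.fE :=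
  Function.LeftInverse.injective φ.leftE

theorem l_eq (φ : Iso A B) (v : A.V) : A.l v = B.l (φ.toMor.fV v) := by
  cases hl : A.l v with
  | some a => exact (φ.toMor.nodeLabel v a hl).symm
  | none =>
    cases hb : B.l (φ.toMor.fV v) with
    | none => rfl
    | some a =>
      have h2 := φ.invMor.nodeLabel _ a hb
      rw [φ.leftV] at h2
      rw [hl] at h2
      exact absurd h2 (by simp)

theorem p_eq (φ : Iso A B) (v : A.V) : A.p v = B.p (φ.toMor.fV v) := by
  cases hl : A.p v with
  | some a => exact (φ.toMor.rootedness v a hl).symm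
  | none =>
    cases hb : B.p (φ.toMor.fV v) with
    | none => rfl
    | some a =>
      have h2 := φ.invMor.rootedness _ a hb
      rw [φ.leftV] at h2
      rw [hl] at h2
      exact absurd h2 (by simp)

/-- Build an isomorphism from bijections commuting with the structure. -/
noncomputable def mk' (fV : A.V → B.V) (fE : A.E → B.E)
    (hV : Function.Bijective fV) (hE : Function.Bijective fE)
    (hs : ∀ e, fV (A.s e) = B.s (fE e)) (ht : ∀ e, fV (A.t e) = B.t (fE e))
    (hm : ∀ e, A.m e = B.m (fE e))
    (hl : ∀ v, A.l v = B.l (fV v)) (hp : ∀ v, A.p v = B.p (fV v)) : Iso A B :=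
  let iV : B.V → A.V := fun b => (hV.2 b).choose
  let iE : B.E → A.E := fun b => (hE.2 b).choose
  have hiV : ∀ b, fV (iV b) = b := fun b => (hV.2 b).choose_spec
  have hiE : ∀ b, fE (iE b) = b := fun b => (hE.2 b).choose_spec
  have hiV' : ∀ v, iV (fV v) = v := fun v => hV.1 (hiV _)
  have hiE' : ∀ e, iE (fE e) = e := fun e => hE.1 (hiE _)
  { toMor := ⟨fV, fE, hs, ht, hm,
      fun v x hx => by rw [← hl]; exact hx,
      fun v b hb => by rw [← hp]; exact hb⟩
    invMor := ⟨iV, iE,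
      fun e => hV.1 (by rw [hiV, hs, hiE]),
      fun e => hV.1 (by rw [hiV, ht, hiE]),
      fun e => by rw [hm (iE e), hiE],
      fun v x hx => by rw [hl (iV v), hiV]; exact hx,
      fun v b hb => by rw [hp (iV v), hiV]; exact hb⟩
    leftV := hiV'
    leftE := hiE'
    rightV := hiV
    rightE := hiE }

end Iso

namespace Rule

variable (r : Rule LV LE) {G : RGraph LV LE}

theorem kept_incL_E {g : Morphism r.L G} (hinj : g.Injective) (k : r.K.E) :
    g.fE (r.incL.fE k) ∉ r.DelE G g := by
  rintro ⟨e, he, heq⟩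
  exact he k (hinj.2 heq).symm

variable (g : Morphism r.L G) (h : r.Applicable G g)

/- definitional unfolding lemmas for `result` -/
theorem result_s_inl (x : {x : G.E // x ∉ r.DelE G g}) :
    (r.result G g h).s (Sum.inl x) = Sum.inl ⟨G.s x.1, r.kept_src G h x.2⟩ := rfl

theorem result_s_inr (x : {e : r.R.E // ∀ k, r.incR.fE k ≠ e}) :
    (r.result G g h).s (Sum.inr x) =
      (if hk : ∃ k, r.incR.fV k = r.R.s x.1 then
        Sum.inl ⟨g.fV (r.incL.fV hk.choose), r.kept_incL G h.1 _⟩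
      else Sum.inr ⟨r.R.s x.1, fun k hk' => hk ⟨k, hk'⟩⟩) := rfl

theorem result_t_inl (x : {x : G.E // x ∉ r.DelE G g}) :
    (r.result G g h).t (Sum.inl x) = Sum.inl ⟨G.t x.1, r.kept_tgt G h x.2⟩ := rfl

theorem result_t_inr (x : {e : r.R.E // ∀ k, r.incR.fE k ≠ e}) :
    (r.result G g h).t (Sum.inr x) =
      (if hk : ∃ k, r.incR.fV k = r.R.t x.1 then
        Sum.inl ⟨g.fV (r.incL.fV hk.choose), r.kept_incL G h.1 _⟩
      else Sum.inr ⟨r.R.t x.1, fun k hk' => hk ⟨k, hk'⟩⟩) := rfl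

theorem result_l_inl (x : {x : G.V // x ∉ r.DelV G g}) :
    (r.result G g h).l (Sum.inl x) =
      (if hk : ∃ k : r.K.V, r.K.l k = none ∧ g.fV (r.incL.fV k) = x.1 then
        r.R.l (r.incR.fV hk.choose)
      else G.l x.1) := rfl

theorem result_l_inr (v : {v : r.R.V // ∀ k, r.incR.fV k ≠ v}) :
    (r.result G g h).l (Sum.inr v) = r.R.l v.1 := rfl

theorem result_p_inl (x : {x : G.V // x ∉ r.DelV G g}) :
    (r.result G g h).p (Sum.inl x) =
      (if hk : ∃ k : r.K.V, r.K.p k = none ∧ g.fV (r.incL.fV k) = x.1 then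
        r.R.p (r.incR.fV hk.choose)
      else G.p x.1) := rfl

theorem result_p_inr (v : {v : r.R.V // ∀ k, r.incR.fV k ≠ v}) :
    (r.result G g h).p (Sum.inr v) = r.R.p v.1 := rfl

theorem result_m_inl (x : {x : G.E // x ∉ r.DelE G g}) :
    (r.result G g h).m (Sum.inl x) = G.m x.1 := rfl

theorem result_m_inr (x : {e : r.R.E // ∀ k, r.incR.fE k ≠ e}) :
    (r.result G g h).m (Sum.inr x) = r.R.m x.1 := rfl

/-- Vertex map of the comatch `R → (result of applying r)`. -/
noncomputable def comatchV (v : r.R.V) : (r.result G g h).V :=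
  if hk : ∃ k, r.incR.fV k = v then
    Sum.inl ⟨g.fV (r.incL.fV hk.choose), r.kept_incL G h.1 _⟩
  else Sum.inr ⟨v, fun k hk' => hk ⟨k, hk'⟩⟩

noncomputable def comatchE (e : r.R.E) : (r.result G g h).E :=
  if hk : ∃ k, r.incR.fE k = e then
    Sum.inl ⟨g.fE (r.incL.fE hk.choose), r.kept_incL_E h.1 _⟩
  else Sum.inr ⟨e, fun k hk' => hk ⟨k, hk'⟩⟩

theorem comatchV_incR (k : r.K.V) :
    r.comatchV g h (r.incR.fV k) = Sum.inl ⟨g.fV (r.incL.fV k), r.kept_incL G h.1 k⟩ := by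
  have hk : ∃ k', r.incR.fV k' = r.incR.fV k := ⟨k, rfl⟩
  unfold comatchV
  exact (dif_pos hk).trans (inl_ext (congrArg (fun x => g.fV (r.incL.fV x)) (r.injR.1 hk.choose_spec)))

theorem comatchV_not (v : r.R.V) (hv : ∀ k, r.incR.fV k ≠ v) :
    r.comatchV g h v = Sum.inr ⟨v, hv⟩ := by
  unfold comatchV
  exact dif_neg (by rintro ⟨k, hk⟩; exact hv k hk)

theorem comatchE_incR (k : r.K.E) :
    r.comatchE g h (r.incR.fE k) = Sum.inl ⟨g.fE (r.incL.fE k), r.kept_incL_E h.1 k⟩ := by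
  have hk : ∃ k', r.incR.fE k' = r.incR.fE k := ⟨k, rfl⟩
  unfold comatchE
  exact (dif_pos hk).trans (inl_ext (congrArg (fun x => g.fE (r.incL.fE x)) (r.injR.2 hk.choose_spec)))

theorem comatchE_not (e : r.R.E) (he : ∀ k, r.incR.fE k ≠ e) :
    r.comatchE g h e = Sum.inr ⟨e, he⟩ := by
  unfold comatchE
  exact dif_neg (by rintro ⟨k, hk⟩; exact he k hk)

/-- The comatch: the natural injection of `R` into the result graph. -/
noncomputable def comatch : Morphism r.R (r.result G g h) where
  fV := r.comatchV g h
  fE := r.comatchE g h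
  src e := by
    by_cases hk : ∃ k, r.incR.fE k = e
    · obtain ⟨k, rfl⟩ := hk
      rw [comatchE_incR, result_s_inl,
        show r.R.s (r.incR.fE k) = r.incR.fV (r.K.s k) from (r.incR.src k).symm,
        comatchV_incR]
      exact inl_ext (by rw [r.incL.src, g.src])
    · have hne : ∀ k', r.incR.fE k' ≠ e := fun k' hk' => hk ⟨k', hk'⟩
      rw [comatchE_not _ _ _ e hne, result_s_inr, comatchV]
      rfl
  tgt e := by
    by_cases hk : ∃ k, r.incR.fE k = e
    · obtain ⟨k, rfl⟩ := hk
      rw [comatchE_incR, result_t_inl,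
        show r.R.t (r.incR.fE k) = r.incR.fV (r.K.t k) from (r.incR.tgt k).symm,
        comatchV_incR]
      exact inl_ext (by rw [r.incL.tgt, g.tgt])
    · have hne : ∀ k', r.incR.fE k' ≠ e := fun k' hk' => hk ⟨k', hk'⟩
      rw [comatchE_not _ _ _ e hne, result_t_inr, comatchV]
      rfl
  edgeLabel e := by
    by_cases hk : ∃ k, r.incR.fE k = e
    · obtain ⟨k, rfl⟩ := hk
      rw [comatchE_incR, result_m_inl, ← g.edgeLabel, ← r.incL.edgeLabel, r.incR.edgeLabel]
    · have hne : ∀ k', r.incR.fE k' ≠ e := fun k' hk' => hk ⟨k', hk'⟩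
      rw [comatchE_not _ _ _ e hne, result_m_inr]
  nodeLabel v x hx := by
    by_cases hk : ∃ k, r.incR.fV k = v
    · obtain ⟨k, rfl⟩ := hk
      rw [comatchV_incR, result_l_inl]
      by_cases hk2 : ∃ k', r.K.l k' = none ∧ g.fV (r.incL.fV k') = g.fV (r.incL.fV k)
      · rw [dif_pos hk2, r.injL.1 (h.1.1 hk2.choose_spec.2)]
        exact hx
      · rw [dif_neg hk2]
        cases hKl : r.K.l k with
        | none => exact absurd ⟨k, hKl, rfl⟩ hk2
        | some a =>
          have h1 := r.incR.nodeLabel k a hKl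
          rw [hx] at h1
          have h2 := g.nodeLabel _ a (r.incL.nodeLabel k a hKl)
          rw [h2, h1]
    · rw [comatchV_not _ _ _ v (fun k hk' => hk ⟨k, hk'⟩), result_l_inr]
      exact hx
  rootedness v x hx := by
    by_cases hk : ∃ k, r.incR.fV k = v
    · obtain ⟨k, rfl⟩ := hk
      rw [comatchV_incR, result_p_inl]
      by_cases hk2 : ∃ k', r.K.p k' = none ∧ g.fV (r.incL.fV k') = g.fV (r.incL.fV k)
      · rw [dif_pos hk2, r.injL.1 (h.1.1 hk2.choose_spec.2)]
        exact hx
      · rw [dif_neg hk2]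
        cases hKl : r.K.p k with
        | none => exact absurd ⟨k, hKl, rfl⟩ hk2
        | some a =>
          have h1 := r.incR.rootedness k a hKl
          rw [hx] at h1
          have h2 := g.rootedness _ a (r.incL.rootedness k a hKl)
          rw [h2, h1]
    · rw [comatchV_not _ _ _ v (fun k hk' => hk ⟨k, hk'⟩), result_p_inr]
      exact hx

theorem comatch_inj : (r.comatch g h).Injective := by
  constructor
  · intro v1 v2 heq
    by_cases h1 : ∃ k, r.incR.fV k = v1 <;> by_cases h2 : ∃ k, r.incR.fV k = v2
    · obtain ⟨k1, rfl⟩ := h1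
      obtain ⟨k2, rfl⟩ := h2
      have heq' := heq
      rw [show (r.comatch g h).fV = r.comatchV g h from rfl, comatchV_incR, comatchV_incR] at heq'
      rw [r.injL.1 (h.1.1 (congrArg Subtype.val (Sum.inl.inj heq')))]
    · obtain ⟨k1, rfl⟩ := h1
      have heq' := heq
      rw [show (r.comatch g h).fV = r.comatchV g h from rfl, comatchV_incR,
        comatchV_not _ _ _ v2 (fun k hk => h2 ⟨k, hk⟩)] at heq'
      exact absurd heq' (by simp)
    · obtain ⟨k2, rfl⟩ := h2
      have heq' := heq
      rw [show (r.comatch g h).fV = r.comatchV g h from rfl, comatchV_incR,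
        comatchV_not _ _ _ v1 (fun k hk => h1 ⟨k, hk⟩)] at heq'
      exact absurd heq' (by simp)
    · have heq' := heq
      rw [show (r.comatch g h).fV = r.comatchV g h from rfl,
        comatchV_not _ _ _ v1 (fun k hk => h1 ⟨k, hk⟩),
        comatchV_not _ _ _ v2 (fun k hk => h2 ⟨k, hk⟩)] at heq'
      exact congrArg Subtype.val (Sum.inr.inj heq')
  · intro e1 e2 heq
    by_cases h1 : ∃ k, r.incR.fE k = e1 <;> by_cases h2 : ∃ k, r.incR.fE k = e2
    · obtain ⟨k1, rfl⟩ := h1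
      obtain ⟨k2, rfl⟩ := h2
      have heq' := heq
      rw [show (r.comatch g h).fE = r.comatchE g h from rfl, comatchE_incR, comatchE_incR] at heq'
      rw [r.injL.2 (h.1.2 (congrArg Subtype.val (Sum.inl.inj heq')))]
    · obtain ⟨k1, rfl⟩ := h1
      have heq' := heq
      rw [show (r.comatch g h).fE = r.comatchE g h from rfl, comatchE_incR,
        comatchE_not _ _ _ e2 (fun k hk => h2 ⟨k, hk⟩)] at heq'
      exact absurd heq' (by simp)
    · obtain ⟨k2, rfl⟩ := h2
      have heq' := heq
      rw [show (r.comatch g h).fE = r.comatchE g h from rfl, comatchE_incR,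
        comatchE_not _ _ _ e1 (fun k hk => h1 ⟨k, hk⟩)] at heq'
      exact absurd heq' (by simp)
    · have heq' := heq
      rw [show (r.comatch g h).fE = r.comatchE g h from rfl,
        comatchE_not _ _ _ e1 (fun k hk => h1 ⟨k, hk⟩),
        comatchE_not _ _ _ e2 (fun k hk => h2 ⟨k, hk⟩)] at heq'
      exact congrArg Subtype.val (Sum.inr.inj heq')

theorem comatch_dangling : (r.inv).Dangling (r.result G g h) (r.comatch g h) := by
  intro e hne v hv
  cases e with
  | inr x =>
    exact absurd (r.comatchE_not g h x.1 x.2) (hne x.1)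
  | inl x =>
    constructor
    · rw [result_s_inl, show (r.comatch g h).fV = r.comatchV g h from rfl,
        comatchV_not _ _ _ v hv]
      exact Sum.inl_ne_inr
    · rw [result_t_inl, show (r.comatch g h).fV = r.comatchV g h from rfl,
        comatchV_not _ _ _ v hv]
      exact Sum.inl_ne_inr

theorem comatch_applicable : (r.inv).Applicable (r.result G g h) (r.comatch g h) :=
  ⟨r.comatch_inj g h, r.comatch_dangling g h⟩

theorem comatch_fV : (r.comatch g h).fV = r.comatchV g h := rfl

theorem comatch_fE : (r.comatch g h).fE = r.comatchE g h := rfl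

end Rule

end Invertibility

section Invertibility2

attribute [local instance] Classical.propDecidable

variable {LV LE : Type}

namespace Rule

variable (r : Rule LV LE) {G : RGraph LV LE} (g : Morphism r.L G) (h : r.Applicable G g)

theorem inl_not_delV (x : {x : G.V // x ∉ r.DelV G g}) :
    (Sum.inl x : (r.result G g h).V) ∉ (r.inv).DelV (r.result G g h) (r.comatch g h) := by
  rintro ⟨v, hv, heq⟩
  rw [show (r.comatch g h).fV = r.comatchV g h from rfl, comatchV_not _ _ _ v hv] at heq
  exact absurd heq (by simp)

theorem inl_not_delE (x : {x : G.E // x ∉ r.DelE G g}) :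
    (Sum.inl x : (r.result G g h).E) ∉ (r.inv).DelE (r.result G g h) (r.comatch g h) := by
  rintro ⟨e, he, heq⟩
  rw [show (r.comatch g h).fE = r.comatchE g h from rfl, comatchE_not _ _ _ e he] at heq
  exact absurd heq (by simp)

theorem inr_mem_delV (v : {v : r.R.V // ∀ k, r.incR.fV k ≠ v}) :
    (Sum.inr v : (r.result G g h).V) ∈ (r.inv).DelV (r.result G g h) (r.comatch g h) :=
  ⟨v.1, v.2, r.comatchV_not g h v.1 v.2⟩

theorem inr_mem_delE (x : {e : r.R.E // ∀ k, r.incR.fE k ≠ e}) :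
    (Sum.inr x : (r.result G g h).E) ∈ (r.inv).DelE (r.result G g h) (r.comatch g h) :=
  ⟨x.1, x.2, r.comatchE_not g h x.1 x.2⟩

/-- The vertex map from the result of applying the inverse rule to the result, back to `G`. -/
noncomputable def backV :
    ((r.inv).result (r.result G g h) (r.comatch g h) (r.comatch_applicable g h)).V → G.V :=
  fun w =>
    match w with
    | Sum.inl ⟨Sum.inl x, _⟩ => x.1
    | Sum.inl ⟨Sum.inr v, hw⟩ => (hw (r.inr_mem_delV g h v)).elim
    | Sum.inr v => g.fV v.1

noncomputable def backE :
    ((r.inv).result (r.result G g h) (r.comatch g h) (r.comatch_applicable g h)).E → G.E :=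
  fun w =>
    match w with
    | Sum.inl ⟨Sum.inl x, _⟩ => x.1
    | Sum.inl ⟨Sum.inr x, hw⟩ => (hw (r.inr_mem_delE g h x)).elim
    | Sum.inr e => g.fE e.1

theorem backV_eq (w : (r.result G g h).V)
    (hw : w ∉ (r.inv).DelV (r.result G g h) (r.comatch g h))
    (x : {x : G.V // x ∉ r.DelV G g}) (hx : w = Sum.inl x) :
    r.backV g h (Sum.inl ⟨w, hw⟩) = x.1 := by
  subst hx; rfl

theorem backE_eq (w : (r.result G g h).E)
    (hw : w ∉ (r.inv).DelE (r.result G g h) (r.comatch g h))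
    (x : {x : G.E // x ∉ r.DelE G g}) (hx : w = Sum.inl x) :
    r.backE g h (Sum.inl ⟨w, hw⟩) = x.1 := by
  subst hx; rfl

theorem backV_comatch (k : r.K.V)
    (hw : (r.comatch g h).fV (r.incR.fV k)
      ∉ (r.inv).DelV (r.result G g h) (r.comatch g h)) :
    r.backV g h (Sum.inl ⟨(r.comatch g h).fV (r.incR.fV k), hw⟩) = g.fV (r.incL.fV k) :=
  r.backV_eq g h _ hw _ (r.comatchV_incR g h k)

theorem backV_bij : Function.Bijective (r.backV g h) := by
  constructor
  · rintro (⟨(x | v), hw⟩ | v) (⟨(y | u), hw'⟩ | u) heq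
    · exact congrArg Sum.inl (Subtype.ext (congrArg Sum.inl (Subtype.ext heq)))
    · exact (hw' (r.inr_mem_delV g h u)).elim
    · exact absurd ⟨u.1, u.2, heq.symm⟩ x.2
    · exact (hw (r.inr_mem_delV g h v)).elim
    · exact (hw (r.inr_mem_delV g h v)).elim
    · exact (hw (r.inr_mem_delV g h v)).elim
    · exact absurd ⟨v.1, v.2, heq⟩ y.2
    · exact (hw' (r.inr_mem_delV g h u)).elim
    · exact congrArg Sum.inr (Subtype.ext (h.1.1 heq))
  · intro y
    by_cases hy : y ∈ r.DelV G g
    · obtain ⟨v, hv, hvy⟩ := hy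
      exact ⟨Sum.inr ⟨v, hv⟩, hvy⟩
    · exact ⟨Sum.inl ⟨Sum.inl ⟨y, hy⟩, r.inl_not_delV g h _⟩, rfl⟩

theorem backE_bij : Function.Bijective (r.backE g h) := by
  constructor
  · rintro (⟨(x | v), hw⟩ | v) (⟨(y | u), hw'⟩ | u) heq
    · exact congrArg Sum.inl (Subtype.ext (congrArg Sum.inl (Subtype.ext heq)))
    · exact (hw' (r.inr_mem_delE g h u)).elim
    · exact absurd ⟨u.1, u.2, heq.symm⟩ x.2
    · exact (hw (r.inr_mem_delE g h v)).elim
    · exact (hw (r.inr_mem_delE g h v)).elim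
    · exact (hw (r.inr_mem_delE g h v)).elim
    · exact absurd ⟨v.1, v.2, heq⟩ y.2
    · exact (hw' (r.inr_mem_delE g h u)).elim
    · exact congrArg Sum.inr (Subtype.ext (h.1.2 heq))
  · intro y
    by_cases hy : y ∈ r.DelE G g
    · obtain ⟨e, he, hey⟩ := hy
      exact ⟨Sum.inr ⟨e, he⟩, hey⟩
    · exact ⟨Sum.inl ⟨Sum.inl ⟨y, hy⟩, r.inl_not_delE g h _⟩, rfl⟩

theorem back_src (e : ((r.inv).result (r.result G g h) (r.comatch g h)
    (r.comatch_applicable g h)).E) :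
    r.backV g h (((r.inv).result (r.result G g h) (r.comatch g h)
      (r.comatch_applicable g h)).s e) = G.s (r.backE g h e) := by
  rcases e with ⟨(x | v), hw⟩ | ⟨e0, he0⟩
  · rfl
  · exact (hw (r.inr_mem_delE g h v)).elim
  · erw [result_s_inr]
    simp only [Rule.inv]
    by_cases hc : ∃ k, r.incL.fV k = r.L.s e0
    · erw [dif_pos hc, r.backV_comatch g h hc.choose _, hc.choose_spec]
      exact g.src e0
    · erw [dif_neg hc]
      exact g.src e0

theorem back_tgt (e : ((r.inv).result (r.result G g h) (r.comatch g h)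
    (r.comatch_applicable g h)).E) :
    r.backV g h (((r.inv).result (r.result G g h) (r.comatch g h)
      (r.comatch_applicable g h)).t e) = G.t (r.backE g h e) := by
  rcases e with ⟨(x | v), hw⟩ | ⟨e0, he0⟩
  · rfl
  · exact (hw (r.inr_mem_delE g h v)).elim
  · erw [result_t_inr]
    simp only [Rule.inv]
    by_cases hc : ∃ k, r.incL.fV k = r.L.t e0
    · erw [dif_pos hc, r.backV_comatch g h hc.choose _, hc.choose_spec]
      exact g.tgt e0
    · erw [dif_neg hc]
      exact g.tgt e0

theorem back_m (e : ((r.inv).result (r.result G g h) (r.comatch g h)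
    (r.comatch_applicable g h)).E) :
    ((r.inv).result (r.result G g h) (r.comatch g h) (r.comatch_applicable g h)).m e
      = G.m (r.backE g h e) := by
  rcases e with ⟨(x | v), hw⟩ | ⟨e0, he0⟩
  · rfl
  · exact (hw (r.inr_mem_delE g h v)).elim
  · exact g.edgeLabel e0

theorem back_l (hL : r.L.IsTLRG)
    (v : ((r.inv).result (r.result G g h) (r.comatch g h) (r.comatch_applicable g h)).V) :
    ((r.inv).result (r.result G g h) (r.comatch g h) (r.comatch_applicable g h)).l v
      = G.l (r.backV g h v) := by
  rcases v with ⟨(x | v), hw⟩ | ⟨v0, hv0⟩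
  · erw [result_l_inl, r.backV_eq g h _ _ _ rfl]
    simp only [Rule.inv]
    by_cases hc : ∃ k : r.K.V, r.K.l k = none ∧ (r.comatch g h).fV (r.incR.fV k) = Sum.inl x
    · erw [dif_pos hc]
      obtain ⟨h1, h2⟩ := hc.choose_spec
      have h3 : (Sum.inl ⟨g.fV (r.incL.fV hc.choose), r.kept_incL G h.1 hc.choose⟩ :
          (r.result G g h).V) = Sum.inl x := (r.comatchV_incR g h hc.choose).symm.trans h2
      have h2' : g.fV (r.incL.fV hc.choose) = x.1 :=
        congrArg Subtype.val (Sum.inl.inj h3)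
      obtain ⟨a, ha⟩ := Option.isSome_iff_exists.mp (hL.1 (r.incL.fV hc.choose))
      rw [ha, ← h2', g.nodeLabel _ a ha]
    · erw [dif_neg hc, result_l_inl, dif_neg]
      rintro ⟨k, hk1, hk2⟩
      refine hc ⟨k, hk1, ?_⟩
      rw [show (r.comatch g h).fV = r.comatchV g h from rfl, comatchV_incR]
      exact inl_ext hk2
  · exact (hw (r.inr_mem_delV g h v)).elim
  · show r.L.l v0 = G.l (g.fV v0)
    obtain ⟨a, ha⟩ := Option.isSome_iff_exists.mp (hL.1 v0)
    rw [ha, g.nodeLabel _ a ha]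

theorem back_p (hL : r.L.IsTLRG)
    (v : ((r.inv).result (r.result G g h) (r.comatch g h) (r.comatch_applicable g h)).V) :
    ((r.inv).result (r.result G g h) (r.comatch g h) (r.comatch_applicable g h)).p v
      = G.p (r.backV g h v) := by
  rcases v with ⟨(x | v), hw⟩ | ⟨v0, hv0⟩
  · erw [result_p_inl, r.backV_eq g h _ _ _ rfl]
    simp only [Rule.inv]
    by_cases hc : ∃ k : r.K.V, r.K.p k = none ∧ (r.comatch g h).fV (r.incR.fV k) = Sum.inl x
    · erw [dif_pos hc]
      obtain ⟨h1, h2⟩ := hc.choose_spec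
      have h3 : (Sum.inl ⟨g.fV (r.incL.fV hc.choose), r.kept_incL G h.1 hc.choose⟩ :
          (r.result G g h).V) = Sum.inl x := (r.comatchV_incR g h hc.choose).symm.trans h2
      have h2' : g.fV (r.incL.fV hc.choose) = x.1 :=
        congrArg Subtype.val (Sum.inl.inj h3)
      obtain ⟨a, ha⟩ := Option.isSome_iff_exists.mp (hL.2 (r.incL.fV hc.choose))
      rw [ha, ← h2', g.rootedness _ a ha]
    · erw [dif_neg hc, result_p_inl, dif_neg]
      rintro ⟨k, hk1, hk2⟩
      refine hc ⟨k, hk1, ?_⟩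
      rw [show (r.comatch g h).fV = r.comatchV g h from rfl, comatchV_incR]
      exact inl_ext hk2
  · exact (hw (r.inr_mem_delV g h v)).elim
  · show r.L.p v0 = G.p (g.fV v0)
    obtain ⟨a, ha⟩ := Option.isSome_iff_exists.mp (hL.2 v0)
    rw [ha, g.rootedness _ a ha]

theorem result_inv_iso (hL : r.L.IsTLRG) :
    Nonempty (Iso ((r.inv).result (r.result G g h) (r.comatch g h)
      (r.comatch_applicable g h)) G) :=
  ⟨Iso.mk' (r.backV g h) (r.backE g h) (r.backV_bij g h) (r.backE_bij g h)
    (r.back_src g h) (r.back_tgt g h) (r.back_m g h) (r.back_l g h hL) (r.back_p g h hL)⟩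

end Rule

end Invertibility2

section Invertibility3

attribute [local instance] Classical.propDecidable

variable {LV LE : Type}

namespace Rule

theorem applicable_comp {s : Rule LV LE} {A B : RGraph LV LE} {m : Morphism s.L A}
    (hm : s.Applicable A m) (φ : Iso A B) : s.Applicable B (m.comp φ.toMor) := by
  constructor
  · exact ⟨fun a b hab => hm.1.1 (φ.injV hab), fun a b hab => hm.1.2 (φ.injE hab)⟩
  · intro e hne v hv
    have hne' : ∀ e', m.fE e' ≠ φ.invMor.fE e := by
      intro e' hee
      exact hne e' (by show φ.toMor.fE (m.fE e') = e; rw [hee, φ.rightE])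
    have hd := hm.2 (φ.invMor.fE e) hne' v hv
    constructor
    · intro hq
      apply hd.1
      apply φ.injV
      rw [φ.toMor.src, φ.rightE]
      exact hq
    · intro hq
      apply hd.2
      apply φ.injV
      rw [φ.toMor.tgt, φ.rightE]
      exact hq

variable (s : Rule LV LE) {A B : RGraph LV LE} (m : Morphism s.L A)
  (hm : s.Applicable A m) (φ : Iso A B) (hb : s.Applicable B (m.comp φ.toMor))

theorem transV_not_del (x : {x : A.V // x ∉ s.DelV A m}) :
    φ.toMor.fV x.1 ∉ s.DelV B (m.comp φ.toMor) := by
  rintro ⟨v, hv, heq⟩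
  exact x.2 ⟨v, hv, φ.injV heq⟩

theorem transE_not_del (x : {x : A.E // x ∉ s.DelE A m}) :
    φ.toMor.fE x.1 ∉ s.DelE B (m.comp φ.toMor) := by
  rintro ⟨e, he, heq⟩
  exact x.2 ⟨e, he, φ.injE heq⟩

noncomputable def transV : (s.result A m hm).V → (s.result B (m.comp φ.toMor) hb).V :=
  fun w =>
    match w with
    | Sum.inl x => Sum.inl ⟨φ.toMor.fV x.1, s.transV_not_del m φ x⟩
    | Sum.inr v => Sum.inr v

noncomputable def transE : (s.result A m hm).E → (s.result B (m.comp φ.toMor) hb).E :=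
  fun w =>
    match w with
    | Sum.inl x => Sum.inl ⟨φ.toMor.fE x.1, s.transE_not_del m φ x⟩
    | Sum.inr e => Sum.inr e

theorem transV_bij : Function.Bijective (s.transV m hm φ hb) := by
  constructor
  · rintro (x | v) (y | u) heq
    · exact congrArg Sum.inl (Subtype.ext (φ.injV (congrArg Subtype.val (Sum.inl.inj heq))))
    · exact absurd heq (by simp [transV])
    · exact absurd heq (by simp [transV])
    · exact congrArg Sum.inr (Sum.inr.inj heq)
  · rintro (y | u)
    · refine ⟨Sum.inl ⟨φ.invMor.fV y.1, ?_⟩, ?_⟩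
      · rintro ⟨v, hv, heq⟩
        exact y.2 ⟨v, hv, by show φ.toMor.fV (m.fV v) = y.1; rw [heq, φ.rightV]⟩
      · exact congrArg Sum.inl (Subtype.ext (φ.rightV y.1))
    · exact ⟨Sum.inr u, rfl⟩

theorem transE_bij : Function.Bijective (s.transE m hm φ hb) := by
  constructor
  · rintro (x | v) (y | u) heq
    · exact congrArg Sum.inl (Subtype.ext (φ.injE (congrArg Subtype.val (Sum.inl.inj heq))))
    · exact absurd heq (by simp [transE])
    · exact absurd heq (by simp [transE])
    · exact congrArg Sum.inr (Sum.inr.inj heq)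
  · rintro (y | u)
    · refine ⟨Sum.inl ⟨φ.invMor.fE y.1, ?_⟩, ?_⟩
      · rintro ⟨e, he, heq⟩
        exact y.2 ⟨e, he, by show φ.toMor.fE (m.fE e) = y.1; rw [heq, φ.rightE]⟩
      · exact congrArg Sum.inl (Subtype.ext (φ.rightE y.1))
    · exact ⟨Sum.inr u, rfl⟩

theorem trans_src (e : (s.result A m hm).E) :
    s.transV m hm φ hb ((s.result A m hm).s e)
      = (s.result B (m.comp φ.toMor) hb).s (s.transE m hm φ hb e) := by
  rcases e with x | x
  · exact inl_ext (φ.toMor.src x.1)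
  · show s.transV m hm φ hb ((s.result A m hm).s (Sum.inr x))
      = (s.result B (m.comp φ.toMor) hb).s (Sum.inr x)
    rw [result_s_inr, result_s_inr]
    by_cases hc : ∃ k, s.incR.fV k = s.R.s x.1
    · rw [dif_pos hc, dif_pos hc]
      exact inl_ext rfl
    · rw [dif_neg hc, dif_neg hc]
      rfl

theorem trans_tgt (e : (s.result A m hm).E) :
    s.transV m hm φ hb ((s.result A m hm).t e)
      = (s.result B (m.comp φ.toMor) hb).t (s.transE m hm φ hb e) := by
  rcases e with x | x
  · exact inl_ext (φ.toMor.tgt x.1)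
  · show s.transV m hm φ hb ((s.result A m hm).t (Sum.inr x))
      = (s.result B (m.comp φ.toMor) hb).t (Sum.inr x)
    rw [result_t_inr, result_t_inr]
    by_cases hc : ∃ k, s.incR.fV k = s.R.t x.1
    · rw [dif_pos hc, dif_pos hc]
      exact inl_ext rfl
    · rw [dif_neg hc, dif_neg hc]
      rfl

theorem trans_m (e : (s.result A m hm).E) :
    (s.result A m hm).m e = (s.result B (m.comp φ.toMor) hb).m (s.transE m hm φ hb e) := by
  rcases e with x | x
  · exact φ.toMor.edgeLabel x.1
  · rfl

theorem trans_l (v : (s.result A m hm).V) :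
    (s.result A m hm).l v = (s.result B (m.comp φ.toMor) hb).l (s.transV m hm φ hb v) := by
  rcases v with x | v
  · show (s.result A m hm).l (Sum.inl x)
      = (s.result B (m.comp φ.toMor) hb).l (Sum.inl ⟨φ.toMor.fV x.1, s.transV_not_del m φ x⟩)
    rw [result_l_inl, result_l_inl]
    by_cases hc : ∃ k, s.K.l k = none ∧ m.fV (s.incL.fV k) = x.1
    · have hc2 : ∃ k, s.K.l k = none ∧ (m.comp φ.toMor).fV (s.incL.fV k) = φ.toMor.fV x.1 :=
        ⟨hc.choose, hc.choose_spec.1, congrArg φ.toMor.fV hc.choose_spec.2⟩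
      rw [dif_pos hc, dif_pos hc2]
      have he : hc2.choose = hc.choose := by
        apply s.injL.1
        apply hm.1.1
        have h4 : m.fV (s.incL.fV hc2.choose) = x.1 := φ.injV hc2.choose_spec.2
        rw [h4, hc.choose_spec.2]
      rw [he]
    · have hc2 : ¬∃ k, s.K.l k = none ∧ (m.comp φ.toMor).fV (s.incL.fV k) = φ.toMor.fV x.1 := by
        rintro ⟨k, h1, h2⟩
        exact hc ⟨k, h1, φ.injV h2⟩
      rw [dif_neg hc, dif_neg hc2]
      exact φ.l_eq x.1
  · rfl

theorem trans_p (v : (s.result A m hm).V) :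
    (s.result A m hm).p v = (s.result B (m.comp φ.toMor) hb).p (s.transV m hm φ hb v) := by
  rcases v with x | v
  · show (s.result A m hm).p (Sum.inl x)
      = (s.result B (m.comp φ.toMor) hb).p (Sum.inl ⟨φ.toMor.fV x.1, s.transV_not_del m φ x⟩)
    rw [result_p_inl, result_p_inl]
    by_cases hc : ∃ k, s.K.p k = none ∧ m.fV (s.incL.fV k) = x.1
    · have hc2 : ∃ k, s.K.p k = none ∧ (m.comp φ.toMor).fV (s.incL.fV k) = φ.toMor.fV x.1 :=
        ⟨hc.choose, hc.choose_spec.1, congrArg φ.toMor.fV hc.choose_spec.2⟩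
      rw [dif_pos hc, dif_pos hc2]
      have he : hc2.choose = hc.choose := by
        apply s.injL.1
        apply hm.1.1
        have h4 : m.fV (s.incL.fV hc2.choose) = x.1 := φ.injV hc2.choose_spec.2
        rw [h4, hc.choose_spec.2]
      rw [he]
    · have hc2 : ¬∃ k, s.K.p k = none ∧ (m.comp φ.toMor).fV (s.incL.fV k) = φ.toMor.fV x.1 := by
        rintro ⟨k, h1, h2⟩
        exact hc ⟨k, h1, φ.injV h2⟩
      rw [dif_neg hc, dif_neg hc2]
      exact φ.p_eq x.1
  · rfl

theorem result_iso_of_iso :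
    Nonempty (Iso (s.result A m hm) (s.result B (m.comp φ.toMor) hb)) :=
  ⟨Iso.mk' _ _ (s.transV_bij m hm φ hb) (s.transE_bij m hm φ hb)
    (s.trans_src m hm φ hb) (s.trans_tgt m hm φ hb) (s.trans_m m hm φ hb)
    (s.trans_l m hm φ hb) (s.trans_p m hm φ hb)⟩

theorem deriv_inv_aux {r : Rule LV LE} (hL : r.L.IsTLRG) {G H : RGraph LV LE}
    (hd : r.Deriv G H) : (r.inv).Deriv H G := by
  obtain ⟨g, h, ⟨φ⟩⟩ := hd
  have hb := applicable_comp (r.comatch_applicable g h) φ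
  refine ⟨(r.comatch g h).comp φ.toMor, hb, ?_⟩
  obtain ⟨ψ⟩ := (r.inv).result_iso_of_iso (r.comatch g h) (r.comatch_applicable g h) φ hb
  obtain ⟨χ⟩ := r.result_inv_iso g h hL
  exact ⟨ψ.symm.trans χ⟩

end Rule

end Invertibility3

/-- **Invertibility of derivations** (Corollary: Derivations are invertible).
For every rule `r = ⟨L ← K → R⟩` (with `L`, `R` TLRGs) and all TLRGs `G`, `H`:
`G ⇒_r H` iff `H ⇒_{r⁻¹} G`, where `r⁻¹ = ⟨R ← K → L⟩`. -/
theorem derivations_invertible {LV LE : Type} (r : Rule LV LE)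
    (hL : r.L.IsTLRG) (hR : r.R.IsTLRG)
    (G H : RGraph LV LE) (hG : G.IsTLRG) (hH : H.IsTLRG) :
    r.Deriv G H ↔ (Rule.inv r).Deriv H G := by
  constructor
  · exact fun hd => Rule.deriv_inv_aux hL hd
  · exact fun hd => Rule.deriv_inv_aux (r := r.inv) hR hd
end

section
/- The encoding e is a fully faithful functor from graphs over 𝓛 with their morphisms to standard totally labelled graphs over e(𝓛) with their morphisms: e preserves identities and composition, and for all graphs G, H over 𝓛 the map g ↦ e(g) is a bijection from the set of morphisms G → H to the set of morphisms e(G) → e(H). -/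
namespace Rule

variable {LV LE : Type} (r : Rule LV LE) (G : RGraph LV LE)

attribute [local instance] Classical.propDecidable

end Rule

/-! ## Standard (totally labelled, unrooted) graphs and the encoding functor

A *standard* totally labelled graph is modelled as a graph whose node-labelling
is total and whose rootedness function is everywhere undefined.  On such graphs
our morphisms are exactly the standard morphisms (total preservation of node
and edge labels; the rootedness clause is vacuous), and rule application
specialises to standard DPO rule application (the relabelling and re-rooting
clauses act trivially). -/

/-- a standard totally labelled graph: total labelling, no rootedness information -/
def RGraph.IsStandard {AV AE : Type} (G : RGraph AV AE) : Prop :=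
  G.IsTotallyLabelled ∧ ∀ v, G.p v = none

/-- a standard rule: all three component graphs are standard (in particular the
interface is totally labelled, i.e. no relabelling) -/
def Rule.IsStandard {AV AE : Type} (r : Rule AV AE) : Prop :=
  r.L.IsStandard ∧ r.K.IsStandard ∧ r.R.IsStandard

theorem Morphism.label_isSome {LV LE : Type} {G H : RGraph LV LE} (g : Morphism G H)
    {v : G.V} (h : (G.l v).isSome) : (H.l (g.fV v)).isSome := by
  obtain ⟨x, hx⟩ := Option.isSome_iff_exists.mp h
  rw [g.nodeLabel v x hx]
  rfl

theorem Morphism.root_isSome {LV LE : Type} {G H : RGraph LV LE} (g : Morphism G H)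
    {v : G.V} (h : (G.p v).isSome) : (H.p (g.fV v)).isSome := by
  obtain ⟨b, hb⟩ := Option.isSome_iff_exists.mp h
  rw [g.rootedness v b hb]
  rfl

/-- The object encoding `e`: node labels and rootedness are encoded as labelled
loops over the alphabet `e(𝓛) = ({□}, 𝓛_E ⊎ 𝓛_V ⊎ {0,1})`. -/
def enc {LV LE : Type} (G : RGraph LV LE) : RGraph Unit (LE ⊕ LV ⊕ Bool) where
  V := G.V
  E := G.E ⊕ {v : G.V // (G.l v).isSome} ⊕ {v : G.V // (G.p v).isSome}
  finV := G.finV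
  finE := by haveI := G.finV; haveI := G.finE; infer_instance
  s := Sum.elim G.s (Sum.elim Subtype.val Subtype.val)
  t := Sum.elim G.t (Sum.elim Subtype.val Subtype.val)
  l := fun _ => some ()
  m := Sum.elim (fun e => Sum.inl (G.m e))
        (Sum.elim (fun v => Sum.inr (Sum.inl ((G.l v.1).get v.2)))
                  (fun v => Sum.inr (Sum.inr ((G.p v.1).get v.2))))
  p := fun _ => none

theorem enc_isStandard {LV LE : Type} (G : RGraph LV LE) : (enc G).IsStandard :=
  ⟨fun _ => rfl, fun _ => rfl⟩

/-- The arrow encoding `e` on morphisms. -/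
def encMor {LV LE : Type} {G H : RGraph LV LE} (g : Morphism G H) :
    Morphism (enc G) (enc H) where
  fV := g.fV
  fE := Sum.map g.fE (Sum.map (fun v => ⟨g.fV v.1, g.label_isSome v.2⟩)
                              (fun v => ⟨g.fV v.1, g.root_isSome v.2⟩))
  src := by rintro (e | ⟨v, hv⟩ | ⟨v, hv⟩)
            · exact g.src e
            · rfl
            · rfl
  tgt := by rintro (e | ⟨v, hv⟩ | ⟨v, hv⟩)
            · exact g.tgt e
            · rfl
            · rfl
  edgeLabel := by
    rintro (e | ⟨v, hv⟩ | ⟨v, hv⟩)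
    · exact congrArg Sum.inl (g.edgeLabel e)
    · obtain ⟨x, hx⟩ := Option.isSome_iff_exists.mp hv
      simp [enc, Sum.map, hx, g.nodeLabel v x hx]
    · obtain ⟨b, hb⟩ := Option.isSome_iff_exists.mp hv
      simp [enc, Sum.map, hb, g.rootedness v b hb]
  nodeLabel := by
    rintro v x hx
    cases x
    rfl
  rootedness := by
    rintro v b hb
    exact nomatch hb


theorem encMor_injective {LV LE : Type} {G H : RGraph LV LE} {g : Morphism G H}
    (hg : g.Injective) : (encMor g).Injective := by
  refine ⟨hg.1, ?_⟩
  apply Function.Injective.sumMap hg.2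
  apply Function.Injective.sumMap
  · intro a b h
    exact Subtype.ext (hg.1 (congrArg Subtype.val h))
  · intro a b h
    exact Subtype.ext (hg.1 (congrArg Subtype.val h))

/-- The encoding of a rule, `e(r) = ⟨e(L) ← e(K) → e(R)⟩`. -/
def encRule {LV LE : Type} (r : Rule LV LE) : Rule Unit (LE ⊕ LV ⊕ Bool) where
  L := enc r.L
  K := enc r.K
  R := enc r.R
  incL := encMor r.incL
  incR := encMor r.incR
  injL := encMor_injective r.injL
  injR := encMor_injective r.injR

theorem Morphism.ext' {LV LE : Type} {G H : RGraph LV LE} {g h : Morphism G H}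
    (hV : g.fV = h.fV) (hE : g.fE = h.fE) : g = h := by
  cases g; cases h; cases hV; cases hE; rfl

/-- **The encoding is a fully faithful functor**: `e` preserves identities and
composition, and for all graphs `G`, `H` over `𝓛` the map `g ↦ e(g)` is a
bijection from the morphisms `G → H` to the morphisms `e(G) → e(H)`. -/
theorem encoding_fully_faithful_functor {LV LE : Type} :
    (∀ G : RGraph LV LE, encMor (Morphism.ident G) = Morphism.ident (enc G)) ∧
    (∀ (G H K : RGraph LV LE) (g : Morphism G H) (h : Morphism H K),
        encMor (g.comp h) = (encMor g).comp (encMor h)) ∧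
    (∀ G H : RGraph LV LE,
        Function.Bijective (fun g : Morphism G H => encMor g)) := by
  refine ⟨?_, ?_, ?_⟩
  · intro G
    apply Morphism.ext'
    · rfl
    funext x
    rcases x with e | ⟨v, hv⟩ | ⟨v, hv⟩ <;> rfl
  · intro G H K g h
    apply Morphism.ext'
    · rfl
    funext x
    rcases x with e | ⟨v, hv⟩ | ⟨v, hv⟩ <;> rfl
  · intro G H
    constructor
    · intro g g' hgg
      have hgg' : encMor g = encMor g' := hgg
      have hV : g.fV = g'.fV := congrArg (fun m => m.fV) hgg'
      apply Morphism.ext' hV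
      funext e
      have : (encMor g).fE (Sum.inl e) = (encMor g').fE (Sum.inl e) :=
        congrFun (congrArg (fun m => m.fE) hgg') (Sum.inl e)
      exact Sum.inl.inj this
    · intro φ
      -- every edge of form inl e maps to inl e'
      have hedge : ∀ e : G.E, ∃ e' : H.E, φ.fE (Sum.inl e) = Sum.inl e' := by
        intro e
        have := φ.edgeLabel (Sum.inl e)
        rcases h : φ.fE (Sum.inl e) with e' | w | w
        · exact ⟨e', rfl⟩
        · rw [h] at this; simp [enc] at this
        · rw [h] at this; simp [enc] at this
      choose fE' hfE' using hedge
      have hlab : ∀ (v : G.V) (x : LV), G.l v = some x → H.l (φ.fV v) = some x := by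
        intro v x hx
        have hv : (G.l v).isSome := by rw [hx]; rfl
        have hm := φ.edgeLabel (Sum.inr (Sum.inl ⟨v, hv⟩))
        have hs := φ.src (Sum.inr (Sum.inl ⟨v, hv⟩))
        rcases h : φ.fE (Sum.inr (Sum.inl ⟨v, hv⟩)) with e' | w | w
        · rw [h] at hm; simp [enc] at hm
        · rw [h] at hm hs
          simp [enc, hx] at hm hs
          rw [hs, hm, Option.some_get]
        · rw [h] at hm; simp [enc] at hm
      have hroot : ∀ (v : G.V) (b : Bool), G.p v = some b → H.p (φ.fV v) = some b := by
        intro v b hb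
        have hv : (G.p v).isSome := by rw [hb]; rfl
        have hm := φ.edgeLabel (Sum.inr (Sum.inr ⟨v, hv⟩))
        have hs := φ.src (Sum.inr (Sum.inr ⟨v, hv⟩))
        rcases h : φ.fE (Sum.inr (Sum.inr ⟨v, hv⟩)) with e' | w | w
        · rw [h] at hm; simp [enc] at hm
        · rw [h] at hm; simp [enc] at hm
        · rw [h] at hm hs
          simp [enc, hb] at hm hs
          rw [hs, hm, Option.some_get]
      refine ⟨⟨φ.fV, fE', ?_, ?_, ?_, hlab, hroot⟩, ?_⟩
      · intro e
        have := φ.src (Sum.inl e)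
        rw [hfE' e] at this
        exact this
      · intro e
        have := φ.tgt (Sum.inl e)
        rw [hfE' e] at this
        exact this
      · intro e
        have := φ.edgeLabel (Sum.inl e)
        rw [hfE' e] at this
        simpa [enc] using this
      · show encMor _ = φ
        apply Morphism.ext'
        · rfl
        funext x
        rcases x with e | ⟨v, hv⟩ | ⟨v, hv⟩
        · exact (hfE' e).symm
        · have hm := φ.edgeLabel (Sum.inr (Sum.inl ⟨v, hv⟩))
          have hs := φ.src (Sum.inr (Sum.inl ⟨v, hv⟩))
          rcases h : φ.fE (Sum.inr (Sum.inl ⟨v, hv⟩)) with e' | w | w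
          · rw [h] at hm; simp [enc] at hm
          · rw [h] at hs
            simp [enc] at hs
            simp only [encMor, Sum.map, h]
            exact congrArg (fun z => Sum.inr (Sum.inl z)) (Subtype.ext hs)
          · rw [h] at hm; simp [enc] at hm
        · have hm := φ.edgeLabel (Sum.inr (Sum.inr ⟨v, hv⟩))
          have hs := φ.src (Sum.inr (Sum.inr ⟨v, hv⟩))
          rcases h : φ.fE (Sum.inr (Sum.inr ⟨v, hv⟩)) with e' | w | w
          · rw [h] at hm; simp [enc] at hm
          · rw [h] at hm; simp [enc] at hm
          · rw [h] at hs
            simp [enc] at hs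
            simp only [encMor, Sum.map, h]
            exact congrArg (fun z => Sum.inr (Sum.inr z)) (Subtype.ext hs)
end
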